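/- Fix θ ∈ (0, π/2]. Then the function α ↦ ρ_θ(α), defined on (0, +∞) by ρ_θ(α) := ‖exp(Q) − I‖ for any Q ∈ M₂(ℝ) realizing the pair (α, θ), is a strictly increasing continuous bijection from (0, +∞) onto (0, +∞). -/

import Mathlib

open Set Real
open scoped RealInnerProductSpace

/-- The Euclidean plane. -/
abbrev E2 : Type := EuclideanSpace ℝ (Fin 2)

/-- Continuous linear endomorphisms of the Euclidean plane
(2×2 real matrices with the operator norm). -/
abbrev M2 : Type := E2 →L[ℝ] E2

/-- The angle in `[0, π/2]` between the lines `ℝu` and `ℝv` in the Euclidean plane. -/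
noncomputable def lineAngle (u v : E2) : ℝ := Real.arccos (|⟪u, v⟫| / (‖u‖ * ‖v‖))

/-- `Q` realizes the pair `(α, θ)`: it has eigenvalues `α` and `-α`, and the angle
between the corresponding eigenlines is exactly `θ`. -/
def Realizes (Q : M2) (α θ : ℝ) : Prop :=
  ∃ u v : E2, u ≠ 0 ∧ v ≠ 0 ∧ Q u = α • u ∧ Q v = (-α) • v ∧ lineAngle u v = θ

/-- For fixed `θ ∈ (0, π/2]`, the function `ρ_θ : (0,∞) → (0,∞)`,
`ρ_θ(α) = ‖exp(Q) − I‖` for any `Q` realizing `(α, θ)`, is a strictly increasing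
continuous bijection from `(0, +∞)` onto `(0, +∞)`. -/
noncomputable def e₁ : E2 := EuclideanSpace.single 0 1
noncomputable def e₂ : E2 := EuclideanSpace.single 1 1

lemma e₁_apply : e₁ 0 = 1 ∧ e₁ 1 = 0 := by
  constructor <;> simp [e₁, EuclideanSpace.single_apply]

lemma decomp (x : E2) : x = x 0 • e₁ + x 1 • e₂ := by
  ext i
  fin_cases i <;> simp [e₁, e₂, EuclideanSpace.single_apply]

lemma norm_sq_E2 (y : E2) : ‖y‖^2 = y 0^2 + y 1^2 := by
  rw [EuclideanSpace.norm_eq, Real.sq_sqrt (by positivity)]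
  simp [Fin.sum_univ_two, sq_abs]

lemma exp_eigen (Q : M2) (w : E2) (r : ℝ) (h : Q w = r • w) :
    NormedSpace.exp Q w = Real.exp r • w := by
  have hpow : ∀ n : ℕ, (Q ^ n) w = r ^ n • w := by
    intro n; induction n with
    | zero => simp
    | succ n ih =>
      rw [pow_succ, ContinuousLinearMap.mul_apply, h, map_smul, ih, smul_smul, pow_succ]
      ring_nf
  have hs : Summable fun n : ℕ => (n.factorial : ℝ)⁻¹ • Q ^ n :=
    NormedSpace.expSeries_summable' Q
  have happ : (NormedSpace.exp Q) w
      = ∑' n : ℕ, ((n.factorial : ℝ)⁻¹ • Q ^ n) w := by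
    rw [NormedSpace.exp_eq_tsum ℝ]
    exact ((ContinuousLinearMap.apply ℝ E2 w).map_tsum hs)
  rw [happ]
  have : ∀ n : ℕ, ((n.factorial : ℝ)⁻¹ • Q ^ n) w = ((n.factorial : ℝ)⁻¹ * r ^ n) • w := by
    intro n
    rw [ContinuousLinearMap.smul_apply, hpow, smul_smul]
  rw [tsum_congr this]
  have hsum : Summable fun n : ℕ => (n.factorial : ℝ)⁻¹ * r ^ n := by
    simpa [div_eq_inv_mul] using Real.summable_pow_div_factorial r
  rw [hsum.tsum_smul_const, Real.exp_eq_exp_ℝ, NormedSpace.exp_eq_tsum ℝ]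
  simp [smul_eq_mul]

lemma comps (p q : ℝ) : (p • e₁ + q • e₂ : E2) 0 = p ∧ (p • e₁ + q • e₂ : E2) 1 = q := by
  constructor <;> simp [e₁, e₂, EuclideanSpace.single_apply]

lemma norm_e₁ : ‖e₁‖ = 1 := by rw [e₁, EuclideanSpace.norm_single]; norm_num

/-- Core computation: operator norm of an upper-triangular-like 2×2 map. -/
lemma opnorm_2x2 (a m b lam : ℝ) (hlam0 : 0 ≤ lam)
    (key1 : lam^2 - (a^2+b^2+m^2)*lam + (a*b)^2 = 0)
    (key2 : a^2 + b^2 + m^2 ≤ 2*lam)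
    (A : M2) (hAx : ∀ x : E2, A x = (a * x 0 + m * x 1) • e₁ + (b * x 1) • e₂) :
    ‖A‖ = Real.sqrt lam := by
  set p := lam - a^2 with hp
  set r := lam - m^2 - b^2 with hr
  have hpr : p * r = (a*m)^2 := by rw [hp, hr]; linear_combination key1
  have hsum : 0 ≤ p + r := by rw [hp, hr]; linarith
  have h2 : (0:ℝ) ≤ p * r := hpr ▸ sq_nonneg _
  have hp0 : 0 ≤ p := by
    by_contra h
    push_neg at h
    have hr1 : 0 < r := by linarith
    have : 0 < -p * r := mul_pos (by linarith) hr1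
    nlinarith
  have hr0 : 0 ≤ r := by
    by_contra h
    push_neg at h
    have hp1 : 0 < p := by linarith
    have : 0 < p * -r := mul_pos hp1 (by linarith)
    nlinarith
  have hnormx : ∀ x : E2, ‖A x‖^2 = (a * x 0 + m * x 1)^2 + (b * x 1)^2 := by
    intro x
    rw [hAx x, norm_sq_E2]
    rw [(comps _ _).1, (comps _ _).2]
  have hsq1 := Real.sq_sqrt hp0
  have hsq2 := Real.sq_sqrt hr0
  have hub : ∀ x : E2, ‖A x‖^2 ≤ lam * ‖x‖^2 := by
    intro x
    rw [hnormx, norm_sq_E2]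
    have hquad : 0 ≤ p * (x 0)^2 - 2*(a*m)*(x 0 * x 1) + r * (x 1)^2 := by
      rcases le_or_gt 0 (a*m) with h | h
      · have hroot : Real.sqrt p * Real.sqrt r = a*m := by
          rw [← Real.sqrt_mul hp0, hpr, Real.sqrt_sq h]
        have hexp : (Real.sqrt p * x 0 - Real.sqrt r * x 1)^2
            = p * (x 0)^2 - 2*(a*m)*(x 0 * x 1) + r * (x 1)^2 := by
          linear_combination (x 0)^2 * hsq1 + (x 1)^2 * hsq2 - 2*(x 0 * x 1)*hroot
        rw [← hexp]; positivity
      · have hroot : Real.sqrt p * Real.sqrt r = -(a*m) := by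
          rw [← Real.sqrt_mul hp0, hpr, Real.sqrt_sq_eq_abs, abs_of_neg h]
        have hexp : (Real.sqrt p * x 0 + Real.sqrt r * x 1)^2
            = p * (x 0)^2 - 2*(a*m)*(x 0 * x 1) + r * (x 1)^2 := by
          linear_combination (x 0)^2 * hsq1 + (x 1)^2 * hsq2 + 2*(x 0 * x 1)*hroot
        rw [← hexp]; positivity
    rw [hp, hr] at hquad
    nlinarith [hquad]
  have hle : ‖A‖ ≤ Real.sqrt lam := by
    apply ContinuousLinearMap.opNorm_le_bound _ (Real.sqrt_nonneg _)
    intro x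
    have h1 := hub x
    have := Real.sqrt_le_sqrt h1
    rwa [Real.sqrt_sq (norm_nonneg _), Real.sqrt_mul hlam0, Real.sqrt_sq (norm_nonneg _)] at this
  have hge : Real.sqrt lam ≤ ‖A‖ := by
    by_cases hz : p = 0 ∧ a*m = 0
    · have hlam : lam = a^2 := by rw [hp] at hz; linarith [hz.1]
      have hAe : A e₁ = a • e₁ + (0:ℝ) • e₂ := by
        have h := hAx e₁
        have h0 : (e₁ : E2) 0 = 1 := by simp [e₁, EuclideanSpace.single_apply]
        have h1 : (e₁ : E2) 1 = 0 := by simp [e₁, EuclideanSpace.single_apply]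
        rw [h0, h1] at h
        rw [h]; norm_num
      have h1 : ‖A e₁‖ = |a| := by
        rw [hAe]; norm_num
        rw [norm_smul, norm_e₁, mul_one, Real.norm_eq_abs]
      have := A.le_opNorm e₁
      rw [h1, norm_e₁, mul_one] at this
      rwa [hlam, Real.sqrt_sq_eq_abs]
    · obtain ⟨x, hx0, hx1⟩ : ∃ x : E2, x 0 = a*m ∧ x 1 = p := ⟨(a*m) • e₁ + p • e₂, comps _ _⟩
      have hxne : 0 < ‖x‖ := by
        rw [not_and_or] at hz
        have h3 := norm_sq_E2 x
        rw [hx0, hx1] at h3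
        have h4 : 0 < ‖x‖^2 := by
          rw [h3]
          rcases hz with h | h
          · positivity
          · positivity
        nlinarith [norm_nonneg x]
      have heq : ‖A x‖^2 = lam * ‖x‖^2 := by
        rw [hnormx, norm_sq_E2, hx0, hx1]
        rw [hp, hr] at hpr
        rw [hp]
        linear_combination (-(lam - a^2)) * hpr
      have h3 : ‖A x‖ = Real.sqrt lam * ‖x‖ := by
        have := congrArg Real.sqrt heq
        rwa [Real.sqrt_sq (norm_nonneg _), Real.sqrt_mul hlam0, Real.sqrt_sq (norm_nonneg _)] at this
      have := A.le_opNorm x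
      rw [h3] at this
      exact le_of_mul_le_mul_right this hxne
  linarith

noncomputable def ffun (k t : ℝ) : ℝ := (1+k)*t + 1 + 2*k
noncomputable def gfun (k t : ℝ) : ℝ := 2*t*(ffun k t + Real.sqrt ((ffun k t)^2 - 1))
noncomputable def rhoF (k α : ℝ) : ℝ := Real.sqrt (gfun k (Real.cosh α - 1))

variable {k : ℝ}

lemma ffun_one_le (hk : 0 ≤ k) {t : ℝ} (ht : 0 ≤ t) : 1 ≤ ffun k t := by
  unfold ffun; nlinarith

lemma gfun_nonneg (hk : 0 ≤ k) {t : ℝ} (ht : 0 ≤ t) : 0 ≤ gfun k t := by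
  have h1 := ffun_one_le hk ht
  have := Real.sqrt_nonneg ((ffun k t)^2 - 1)
  unfold gfun; nlinarith

lemma gfun_mono (hk : 0 ≤ k) {t₁ t₂ : ℝ} (h1 : 0 ≤ t₁) (h2 : t₁ < t₂) :
    gfun k t₁ < gfun k t₂ := by
  have hf1 : 1 ≤ ffun k t₁ := ffun_one_le hk h1
  have hf2 : 1 ≤ ffun k t₂ := ffun_one_le hk (by linarith)
  have hff : ffun k t₁ ≤ ffun k t₂ := by unfold ffun; nlinarith
  have hw : Real.sqrt ((ffun k t₁)^2 - 1) ≤ Real.sqrt ((ffun k t₂)^2 - 1) := by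
    apply Real.sqrt_le_sqrt; nlinarith
  have hw1 : 0 ≤ Real.sqrt ((ffun k t₁)^2 - 1) := Real.sqrt_nonneg _
  unfold gfun; nlinarith

lemma gfun_zero : gfun k 0 = 0 := by unfold gfun; ring

lemma gfun_ge (hk : 0 ≤ k) {t : ℝ} (ht : 0 ≤ t) : 2*t ≤ gfun k t := by
  have h1 := ffun_one_le hk ht
  have h2 := Real.sqrt_nonneg ((ffun k t)^2 - 1)
  unfold gfun; nlinarith

lemma rhoF_continuous : Continuous (rhoF k) := by
  unfold rhoF gfun ffun
  fun_prop

lemma rhoF_zero : rhoF k 0 = 0 := by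
  unfold rhoF
  rw [Real.cosh_zero]
  norm_num [gfun_zero]

lemma cosh_mono {x y : ℝ} (hx : 0 ≤ x) (hxy : x < y) : Real.cosh x < Real.cosh y := by
  rw [Real.cosh_lt_cosh]
  rw [abs_of_nonneg hx, abs_of_nonneg (by linarith)]
  exact hxy

lemma rhoF_strictMonoOn (hk : 0 ≤ k) : StrictMonoOn (rhoF k) (Set.Ici 0) := by
  intro x hx y _ hxy
  unfold rhoF
  have ht1 : 0 ≤ Real.cosh x - 1 := by nlinarith [Real.one_le_cosh x]
  have ht2 : Real.cosh x - 1 < Real.cosh y - 1 := by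
    have := cosh_mono hx hxy; linarith
  exact Real.sqrt_lt_sqrt (gfun_nonneg hk ht1) (gfun_mono hk ht1 ht2)

lemma rhoF_pos (hk : 0 ≤ k) {α : ℝ} (hα : 0 < α) : 0 < rhoF k α := by
  have := rhoF_strictMonoOn hk (le_refl (0:ℝ)) (le_of_lt hα) hα
  rwa [rhoF_zero] at this

lemma rhoF_large (hk : 0 ≤ k) (y : ℝ) (hy : 0 < y) :
    ∃ β : ℝ, 0 < β ∧ y < rhoF k β := by
  refine ⟨max 1 (y^2 + 3), by positivity, ?_⟩
  set β := max 1 (y^2 + 3) with hβ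
  have hβ2 : y^2 + 3 ≤ β := le_max_right _ _
  have hexp : β + 1 ≤ Real.exp β := Real.add_one_le_exp β
  have hcosh : Real.exp β / 2 ≤ Real.cosh β := by
    rw [Real.cosh_eq]
    have := Real.exp_pos (-β)
    linarith
  have ht : y^2 / 2 < Real.cosh β - 1 := by nlinarith
  have ht0 : 0 ≤ Real.cosh β - 1 := by nlinarith
  have hg : y^2 < gfun k (Real.cosh β - 1) := by
    have := gfun_ge hk ht0
    nlinarith
  have := Real.sqrt_lt_sqrt (sq_nonneg y) hg
  rwa [Real.sqrt_sq hy.le] at this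

lemma rhoF_bijOn (hk : 0 ≤ k) : Set.BijOn (rhoF k) (Set.Ioi 0) (Set.Ioi 0) := by
  refine ⟨fun x hx => rhoF_pos hk hx, ?_, ?_⟩
  · exact ((rhoF_strictMonoOn hk).mono (Set.Ioi_subset_Ici_self)).injOn
  · intro y hy
    obtain ⟨β, hβ0, hβ⟩ := rhoF_large hk y hy
    have hsub := intermediate_value_Ioo (le_of_lt hβ0) (rhoF_continuous (k := k)).continuousOn
    have hmem : y ∈ Set.Ioo (rhoF k 0) (rhoF k β) := by
      rw [rhoF_zero]; exact ⟨hy, hβ⟩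
    obtain ⟨x, hx, hxy⟩ := hsub hmem
    exact ⟨x, hx.1, hxy⟩

/-- key1/key2: `gfun k t` is the top eigenvalue of `AᵀA`. -/
lemma key_facts (hk : 0 ≤ k) {t : ℝ} (ht : 0 < t) :
    (gfun k t)^2 - (4*t*(ffun k t))*(gfun k t) + (2*t)^2 = 0 ∧
    4*t*(ffun k t) ≤ 2 * gfun k t := by
  have hf := ffun_one_le hk ht.le
  have hw : (Real.sqrt ((ffun k t)^2 - 1))^2 = (ffun k t)^2 - 1 :=
    Real.sq_sqrt (by nlinarith)
  have hw0 : 0 ≤ Real.sqrt ((ffun k t)^2 - 1) := Real.sqrt_nonneg _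
  constructor
  · unfold gfun; linear_combination (4*t^2) * hw
  · unfold gfun; nlinarith

lemma hAx_of_eigen (c s a b : ℝ) (hs : s ≠ 0) (A : M2)
    (h1 : A e₁ = a • e₁)
    (h2 : A (c • e₁ + s • e₂) = b • (c • e₁ + s • e₂)) :
    ∀ x : E2, A x = (a * x 0 + ((b-a)*c/s) * x 1) • e₁ + (b * x 1) • e₂ := by
  have hAe2 : A e₂ = ((b-a)*c/s) • e₁ + b • e₂ := by
    rw [map_add, map_smul, map_smul, h1] at h2
    have h3 : A e₂ = s⁻¹ • (b • (c • e₁ + s • e₂) - c • a • e₁) := by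
      rw [← h2]
      rw [add_sub_cancel_left, smul_smul, inv_mul_cancel₀ hs, one_smul]
    rw [h3]
    match_scalars <;> field_simp <;> ring
  intro x
  conv_lhs => rw [decomp x]
  rw [map_add, map_smul, map_smul, h1, hAe2]
  match_scalars <;> field_simp <;> ring

lemma norm_eigen (c s α : ℝ) (hs : 0 < s) (hcs : c^2 + s^2 = 1) (hα : 0 < α)
    (A : M2)
    (h1 : A e₁ = (Real.exp α - 1) • e₁)
    (h2 : A (c • e₁ + s • e₂) = (Real.exp (-α) - 1) • (c • e₁ + s • e₂)) :
    ‖A‖ = rhoF ((c/s)^2) α := by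
  set a := Real.exp α - 1 with ha
  set b := Real.exp (-α) - 1 with hb
  set t := Real.cosh α - 1 with htd
  set k := ((c/s)^2 : ℝ) with hkd
  set m := ((b-a)*c/s : ℝ) with hmd
  have hk : 0 ≤ k := sq_nonneg _
  have hexp1 : Real.exp α * Real.exp (-α) = 1 := by
    rw [← Real.exp_add]; simp
  have hab : a * b = -(a + b) := by rw [ha, hb]; nlinarith
  have ht : t = (a + b)/2 := by
    rw [htd, ha, hb, Real.cosh_eq]; ring
  have htpos : 0 < t := by
    rw [htd]
    have h := Real.one_lt_cosh.mpr (ne_of_gt hα)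
    linarith
  have hm2 : m^2 = (b-a)^2 * k := by rw [hmd, hkd]; ring
  have hT : a^2 + b^2 + m^2 = 4*t*(ffun k t) := by
    rw [ht]
    unfold ffun
    linear_combination hm2 - 2*(1+2*k)*hab
  have hD : (a*b)^2 = (2*t)^2 := by
    rw [ht]; rw [ht] at *
    nlinarith [hab]
  obtain ⟨k1, k2⟩ := key_facts hk htpos
  have hlam0 : 0 ≤ gfun k t := gfun_nonneg hk htpos.le
  have key1 : (gfun k t)^2 - (a^2+b^2+m^2)*(gfun k t) + (a*b)^2 = 0 := by
    rw [hT, hD]; exact k1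
  have key2 : a^2+b^2+m^2 ≤ 2 * gfun k t := by rw [hT]; exact k2
  have hAx := hAx_of_eigen c s a b (ne_of_gt hs) A h1 h2
  rw [← hmd] at hAx
  rw [opnorm_2x2 a m b (gfun k t) hlam0 key1 key2 A hAx]
  rw [rhoF]

lemma realizes_norm (θ α : ℝ) (hθ1 : 0 < θ) (hθ2 : θ ≤ π/2) (hα : 0 < α)
    (Q : M2) (hQ : Realizes Q α θ) :
    ‖NormedSpace.exp Q - 1‖ = rhoF ((Real.cos θ / Real.sin θ)^2) α := by
  have hpi := Real.pi_pos
  set c := Real.cos θ with hcd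
  set s := Real.sin θ with hsd
  have hs : 0 < s := Real.sin_pos_of_pos_of_lt_pi hθ1 (by linarith)
  have hc : 0 ≤ c := Real.cos_nonneg_of_mem_Icc ⟨by linarith, hθ2⟩
  have hcs : c^2 + s^2 = 1 := by rw [hcd, hsd]; exact Real.cos_sq_add_sin_sq θ
  obtain ⟨u, v, hu, hv, hQu, hQv, hangle⟩ := hQ
  have hnu : 0 < ‖u‖ := norm_pos_iff.mpr hu
  have hnv : 0 < ‖v‖ := norm_pos_iff.mpr hv
  -- inner product identity
  have habs : |⟪u, v⟫| ≤ ‖u‖ * ‖v‖ := abs_real_inner_le_norm u v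
  have hx1 : |⟪u, v⟫| / (‖u‖ * ‖v‖) ≤ 1 := (div_le_one (by positivity)).mpr habs
  have hx0 : (0:ℝ) ≤ |⟪u, v⟫| / (‖u‖ * ‖v‖) := by positivity
  have hcosθ : c = |⟪u, v⟫| / (‖u‖ * ‖v‖) := by
    rw [hcd, ← hangle, lineAngle, Real.cos_arccos (by linarith) hx1]
  have hinner : |⟪u, v⟫| = c * (‖u‖ * ‖v‖) := by
    rw [hcosθ]; field_simp
  -- normalized eigenvectors
  set σ : ℝ := if 0 ≤ ⟪u, v⟫ then 1 else -1 with hσd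
  have hσ1 : σ * ⟪u, v⟫ = |⟪u, v⟫| := by
    rw [hσd]; split_ifs with h
    · rw [one_mul, abs_of_nonneg h]
    · push_neg at h; rw [abs_of_neg h]; ring
  have hσabs : |σ| = 1 := by
    rw [hσd]; split_ifs <;> norm_num
  obtain ⟨u', hu'd⟩ : ∃ w : E2, w = ‖u‖⁻¹ • u := ⟨_, rfl⟩
  obtain ⟨v', hv'd⟩ : ∃ w : E2, w = (σ * ‖v‖⁻¹) • v := ⟨_, rfl⟩
  have hQu' : Q u' = α • u' := by rw [hu'd, map_smul, hQu, smul_comm]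
  have hQv' : Q v' = (-α) • v' := by rw [hv'd, map_smul, hQv, smul_comm]
  have hnu' : ‖u'‖ = 1 := by
    rw [hu'd, norm_smul, norm_inv, norm_norm, inv_mul_cancel₀ hnu.ne']
  have hnv' : ‖v'‖ = 1 := by
    rw [hv'd, norm_smul, norm_mul, norm_inv, norm_norm, Real.norm_eq_abs, hσabs,
      one_mul, inv_mul_cancel₀ hnv.ne']
  have hipuu : ⟪u', u'⟫ = 1 := by
    rw [real_inner_self_eq_norm_sq, hnu']; norm_num
  have hipvv : ⟪v', v'⟫ = 1 := by
    rw [real_inner_self_eq_norm_sq, hnv']; norm_num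
  have hipuv : ⟪u', v'⟫ = c := by
    rw [hu'd, hv'd, real_inner_smul_left, real_inner_smul_right]
    have : ‖u‖⁻¹ * (σ * ‖v‖⁻¹ * ⟪u, v⟫) = ‖u‖⁻¹ * ‖v‖⁻¹ * (σ * ⟪u, v⟫) := by ring
    rw [this, hσ1, hinner]
    field_simp
  -- orthonormal frame
  obtain ⟨f2, hf2d⟩ : ∃ w : E2, w = s⁻¹ • (v' - c • u') := ⟨_, rfl⟩
  have hrecomb : c • u' + s • f2 = v' := by
    rw [hf2d, smul_smul, mul_inv_cancel₀ hs.ne', one_smul]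
    abel
  have hipf1f2 : ⟪u', f2⟫ = 0 := by
    rw [hf2d, real_inner_smul_right, inner_sub_right, real_inner_smul_right,
      hipuv, hipuu]
    ring
  have hipf2f2 : ⟪f2, f2⟫ = 1 := by
    have h1 : ⟪v', u'⟫ = c := by rw [real_inner_comm]; exact hipuv
    have hsub : ⟪v' - c • u', v' - c • u'⟫ = s^2 := by
      rw [inner_sub_left, inner_sub_right, inner_sub_right, real_inner_smul_left,
        real_inner_smul_left, real_inner_smul_right, real_inner_smul_right,
        hipuu, hipvv, hipuv, h1]
      linear_combination -hcs
    rw [hf2d, real_inner_smul_left, real_inner_smul_right, hsub]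
    field_simp
  have horth : Orthonormal ℝ ![u', f2] := by
    rw [orthonormal_iff_ite]
    intro i j
    fin_cases i <;> fin_cases j <;>
      simp only [Matrix.cons_val_zero, Matrix.cons_val_one, Matrix.head_cons, Fin.mk_zero,
        Fin.mk_one, if_true, if_false]
    · simpa using hipuu
    · simpa using hipf1f2
    · rw [real_inner_comm]; simpa using hipf1f2
    · simpa using hipf2f2
  have hcard : Fintype.card (Fin 2) = Module.finrank ℝ E2 := by
    simp [finrank_euclideanSpace_fin]
  set bas := basisOfLinearIndependentOfCardEqFinrank horth.linearIndependent hcard with hbasd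
  have hbascoe : ⇑bas = ![u', f2] := coe_basisOfLinearIndependentOfCardEqFinrank _ _
  set B : OrthonormalBasis (Fin 2) ℝ E2 := bas.toOrthonormalBasis (by rwa [hbascoe]) with hBd
  have hB : ∀ i, B i = ![u', f2] i := by
    intro i
    rw [hBd, Module.Basis.coe_toOrthonormalBasis, hbascoe]
  have hB0 : B 0 = u' := by rw [hB]; rfl
  have hB1 : B 1 = f2 := by rw [hB]; rfl
  set W := B.repr with hWd
  -- unit in M2 given by W
  set Wc : M2 := (W.toContinuousLinearEquiv : E2 →L[ℝ] E2) with hWcd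
  set Wc' : M2 := (W.symm.toContinuousLinearEquiv : E2 →L[ℝ] E2) with hWc'd
  have hWc : ∀ x : E2, Wc x = W x := fun x => rfl
  have hWc' : ∀ x : E2, Wc' x = W.symm x := fun x => rfl
  have hmul1 : Wc * Wc' = 1 := by
    ext x
    simp [ContinuousLinearMap.mul_apply, hWc, hWc']
  have hmul2 : Wc' * Wc = 1 := by
    ext x
    simp [ContinuousLinearMap.mul_apply, hWc, hWc']
  set y : M2ˣ := ⟨Wc, Wc', hmul1, hmul2⟩ with hyd
  have hyval : (↑y : M2) = Wc := rfl
  have hyinv : (↑y⁻¹ : M2) = Wc' := rfl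
  -- the conjugated map
  set Q' : M2 := ↑y * Q * ↑y⁻¹ with hQ'd
  have hWsymm_e₁ : W.symm e₁ = u' := by
    rw [← hB0, e₁, ← B.repr_self 0, ← hWd, LinearIsometryEquiv.symm_apply_apply]
  have hWf1 : W u' = e₁ := by rw [← hB0, e₁, hWd]; exact B.repr_self 0
  have hWf2 : W f2 = e₂ := by rw [← hB1, e₂, hWd]; exact B.repr_self 1
  have hQ'1 : Q' e₁ = α • e₁ := by
    rw [hQ'd, ContinuousLinearMap.mul_apply, ContinuousLinearMap.mul_apply,
      hyval, hyinv, hWc', hWc, hWsymm_e₁, hQu', map_smul, hWf1]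
  have hWsymm_v : W.symm (c • e₁ + s • e₂) = v' := by
    rw [← hrecomb, ← hWf1, ← hWf2]
    simp [map_add, map_smul]
  have hWv' : W v' = c • e₁ + s • e₂ := by
    rw [← hrecomb]
    simp [map_add, map_smul, hWf1, hWf2]
  have hQ'2 : Q' (c • e₁ + s • e₂) = (-α) • (c • e₁ + s • e₂) := by
    rw [hQ'd, ContinuousLinearMap.mul_apply, ContinuousLinearMap.mul_apply,
      hyval, hyinv, hWc', hWc, hWsymm_v, hQv', map_smul, hWv']
  -- exp and the norm
  have hexpQ' : NormedSpace.exp Q' = ↑y * NormedSpace.exp Q * ↑y⁻¹ :=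
    let +nondep : NormedAlgebra ℚ M2 := .restrictScalars ℚ ℝ M2
    NormedSpace.exp_units_conj y Q
  have hA'1 : (NormedSpace.exp Q' - 1) e₁ = (Real.exp α - 1) • e₁ := by
    rw [ContinuousLinearMap.sub_apply, ContinuousLinearMap.one_apply,
      exp_eigen Q' e₁ α hQ'1, sub_smul, one_smul]
  have hA'2 : (NormedSpace.exp Q' - 1) (c • e₁ + s • e₂)
      = (Real.exp (-α) - 1) • (c • e₁ + s • e₂) := by
    rw [ContinuousLinearMap.sub_apply, ContinuousLinearMap.one_apply,
      exp_eigen Q' _ (-α) hQ'2, sub_smul, one_smul]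
  have hnormA' : ‖NormedSpace.exp Q' - 1‖ = rhoF ((c/s)^2) α :=
    norm_eigen c s α hs hcs hα _ hA'1 hA'2
  -- conjugation identity
  have hconj : NormedSpace.exp Q' - 1 = ↑y * (NormedSpace.exp Q - 1) * ↑y⁻¹ := by
    rw [hexpQ', mul_sub, sub_mul, mul_one, Units.mul_inv]
  -- norm invariance under conjugation
  have hle : ∀ X : M2, ‖(↑y : M2) * X * ↑y⁻¹‖ ≤ ‖X‖ := by
    intro X
    apply ContinuousLinearMap.opNorm_le_bound _ (norm_nonneg X)
    intro x
    rw [ContinuousLinearMap.mul_apply, ContinuousLinearMap.mul_apply, hyval, hyinv, hWc, hWc']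
    rw [LinearIsometryEquiv.norm_map]
    calc ‖X (W.symm x)‖ ≤ ‖X‖ * ‖W.symm x‖ := X.le_opNorm _
      _ = ‖X‖ * ‖x‖ := by rw [LinearIsometryEquiv.norm_map]
  have hge : ∀ X : M2, ‖X‖ ≤ ‖(↑y : M2) * X * ↑y⁻¹‖ := by
    intro X
    apply ContinuousLinearMap.opNorm_le_bound _ (norm_nonneg _)
    intro x
    have hZ : ((↑y : M2) * X * ↑y⁻¹) (W x) = W (X x) := by
      rw [ContinuousLinearMap.mul_apply, ContinuousLinearMap.mul_apply, hyval, hyinv, hWc, hWc']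
      rw [LinearIsometryEquiv.symm_apply_apply]
    have : ‖X x‖ = ‖((↑y : M2) * X * ↑y⁻¹) (W x)‖ := by
      rw [hZ, LinearIsometryEquiv.norm_map]
    rw [this]
    calc ‖((↑y : M2) * X * ↑y⁻¹) (W x)‖ ≤ ‖(↑y : M2) * X * ↑y⁻¹‖ * ‖W x‖ :=
          ContinuousLinearMap.le_opNorm _ _
      _ = ‖(↑y : M2) * X * ↑y⁻¹‖ * ‖x‖ := by rw [LinearIsometryEquiv.norm_map]
  have : ‖NormedSpace.exp Q - 1‖ = ‖NormedSpace.exp Q' - 1‖ := by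
    rw [hconj]
    exact le_antisymm (hge _) (hle _)
  rw [this, hnormA']

lemma exists_realizing (θ α : ℝ) (hθ1 : 0 < θ) (hθ2 : θ ≤ π/2) :
    ∃ Q : M2, Realizes Q α θ := by
  have hpi := Real.pi_pos
  set c := Real.cos θ with hcd
  set s := Real.sin θ with hsd
  have hs : 0 < s := Real.sin_pos_of_pos_of_lt_pi hθ1 (by linarith)
  have hc : 0 ≤ c := Real.cos_nonneg_of_mem_Icc ⟨by linarith, hθ2⟩
  have hcs : c^2 + s^2 = 1 := by rw [hcd, hsd]; exact Real.cos_sq_add_sin_sq θ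
  set w0 : E2 := α • e₁ with hw0
  set w1 : E2 := (-2*α*c/s) • e₁ + (-α) • e₂ with hw1
  set Q : M2 := (EuclideanSpace.proj (0 : Fin 2)).smulRight w0
    + (EuclideanSpace.proj (1 : Fin 2)).smulRight w1 with hQd
  have hQx : ∀ x : E2, Q x = x 0 • w0 + x 1 • w1 := by
    intro x
    rw [hQd]
    simp [ContinuousLinearMap.smulRight_apply]
  set vθ : E2 := c • e₁ + s • e₂ with hvθ
  have hv0 : vθ 0 = c := (comps c s).1
  have hv1 : vθ 1 = s := (comps c s).2
  have he10 : (e₁ : E2) 0 = 1 := by simp [e₁, EuclideanSpace.single_apply]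
  have he11 : (e₁ : E2) 1 = 0 := by simp [e₁, EuclideanSpace.single_apply]
  have hQe₁ : Q e₁ = α • e₁ := by
    rw [hQx, he10, he11, hw0, one_smul, zero_smul, add_zero]
  have hQv : Q vθ = (-α) • vθ := by
    rw [hQx, hv0, hv1, hw0, hw1, hvθ]
    match_scalars
    · field_simp; ring
    · field_simp
  have hne₁ : (e₁ : E2) ≠ 0 := by
    intro h
    have := norm_e₁
    rw [h, norm_zero] at this
    exact one_ne_zero this.symm
  have hnvθ : ‖vθ‖ = 1 := by
    have h := norm_sq_E2 vθ
    rw [hv0, hv1, hcs] at h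
    nlinarith [norm_nonneg vθ]
  have hvne : vθ ≠ 0 := by
    intro h
    rw [h, norm_zero] at hnvθ
    exact one_ne_zero hnvθ.symm
  have hipe : ⟪e₁, vθ⟫ = c := by
    simp only [e₁]
    rw [EuclideanSpace.inner_single_left]
    simpa using hv0
  refine ⟨Q, e₁, vθ, hne₁, hvne, hQe₁, hQv, ?_⟩
  rw [lineAngle, hipe, norm_e₁, hnvθ, mul_one, div_one, abs_of_nonneg hc, hcd]
  exact Real.arccos_cos hθ1.le (by linarith)

theorem rho_strictMono_bijective_in_alpha
    (θ : ℝ) (hθ : θ ∈ Set.Ioc 0 (π / 2)) :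
    ∃ ρ : ℝ → ℝ,
      (∀ α ∈ Set.Ioi (0 : ℝ), ∃ Q : M2, Realizes Q α θ) ∧
      (∀ α ∈ Set.Ioi (0 : ℝ), ∀ Q : M2, Realizes Q α θ →
        ρ α = ‖NormedSpace.exp Q - 1‖) ∧
      StrictMonoOn ρ (Set.Ioi 0) ∧
      ContinuousOn ρ (Set.Ioi 0) ∧
      Set.BijOn ρ (Set.Ioi 0) (Set.Ioi 0) := by
  refine ⟨rhoF ((Real.cos θ / Real.sin θ)^2), ?_, ?_, ?_, ?_, ?_⟩
  · intro α _
    exact exists_realizing θ α hθ.1 hθ.2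
  · intro α hα Q hQ
    exact (realizes_norm θ α hθ.1 hθ.2 hα Q hQ).symm
  · exact (rhoF_strictMonoOn (sq_nonneg _)).mono Set.Ioi_subset_Ici_self
  · exact rhoF_continuous.continuousOn
  · exact rhoF_bijOn (sq_nonneg _)
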